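/- Let n ≥ 2 be an integer and let A ∈ A(n,2) be self-conjugate, i.e., A = A*. Then n is even and ν(A) = n² − 3n/2. -/

import Mathlib

open Finset

/-- A matrix of zeros and ones. -/
def ZeroOne {m n : ℕ} (A : Matrix (Fin m) (Fin n) ℕ) : Prop :=
  ∀ i j, A i j = 0 ∨ A i j = 1

/-- Sum of the entries of row `i`. -/
def rowSum {m n : ℕ} (A : Matrix (Fin m) (Fin n) ℕ) (i : Fin m) : ℕ :=
  ∑ j, A i j

/-- Sum of the entries of column `j`. -/
def colSum {m n : ℕ} (A : Matrix (Fin m) (Fin n) ℕ) (j : Fin n) : ℕ :=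
  ∑ i, A i j

/-- The class `A(R,S)` of (0,1)-matrices with row sum vector `R` and
column sum vector `S`. -/
def classRS {m n : ℕ} (R : Fin m → ℕ) (S : Fin n → ℕ) :
    Set (Matrix (Fin m) (Fin n) ℕ) :=
  {A | ZeroOne A ∧ (∀ i, rowSum A i = R i) ∧ (∀ j, colSum A j = S j)}

/-- The class `A(n,k)` of square (0,1)-matrices of order `n` with all row
and column sums equal to `k`. -/
def classA (n k : ℕ) : Set (Matrix (Fin n) (Fin n) ℕ) :=
  classRS (fun _ => k) (fun _ => k)

/-- `sigmaM A i j` is the sum of the entries of the leading submatrix of `A`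
on rows `0,…,i` and columns `0,…,j` (0-based), i.e. `σ_{i+1,j+1}(A)` in
1-based notation. -/
def sigmaM {m n : ℕ} (A : Matrix (Fin m) (Fin n) ℕ) (i : Fin m) (j : Fin n) : ℕ :=
  ∑ k ∈ Finset.univ.filter (fun k : Fin m => k ≤ i),
    ∑ l ∈ Finset.univ.filter (fun l : Fin n => l ≤ j), A k l

/-- The Bruhat order: `A ⪯_B C` iff `σ_{ij}(A) ≥ σ_{ij}(C)` for all `i, j`. -/
def brle {m n : ℕ} (A C : Matrix (Fin m) (Fin n) ℕ) : Prop :=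
  ∀ i j, sigmaM C i j ≤ sigmaM A i j

/-- Incomparability in the Bruhat order. -/
def Incomp {m n : ℕ} (A C : Matrix (Fin m) (Fin n) ℕ) : Prop :=
  ¬ brle A C ∧ ¬ brle C A

/-- A set of matrices that is an antichain in the Bruhat order. -/
def IsAntichainB {m n : ℕ} (D : Set (Matrix (Fin m) (Fin n) ℕ)) : Prop :=
  ∀ A ∈ D, ∀ C ∈ D, A ≠ C → Incomp A C

/-- The number of inversions of a (0,1)-matrix: pairs of `1` entries, one of
which is strictly to the top-right of the other (each unordered pair counted
once, via the representative whose first member is in the lower-indexed row). -/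
def nu {m n : ℕ} (A : Matrix (Fin m) (Fin n) ℕ) : ℕ :=
  (Finset.univ.filter (fun p : (Fin m × Fin n) × (Fin m × Fin n) =>
      p.1.1 < p.2.1 ∧ p.2.2 < p.1.2 ∧ A p.1.1 p.1.2 = 1 ∧ A p.2.1 p.2.2 = 1)).card

/-- The conjugate of a matrix: columns in reversed (left-right flipped) order. -/
def conjM {m n : ℕ} (A : Matrix (Fin m) (Fin n) ℕ) : Matrix (Fin m) (Fin n) ℕ :=
  Matrix.of fun i j => A i j.rev

/-- If `n ≥ 2` and `A ∈ A(n,2)` is self-conjugate (`A = A*`),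
then `n` is even and `ν(A) = n² − 3n/2`. -/

lemma aux_small_count {n : ℕ} (α β : Fin n) (hα : α < Fin.rev α) (hβ : β < Fin.rev β) :
    ((({α, Fin.rev α} : Finset (Fin n)) ×ˢ ({β, Fin.rev β} : Finset (Fin n))).filter
      (fun q : Fin n × Fin n => q.2 < q.1)).card = if α = β then 1 else 2 := by
  have hαv : (α:ℕ) + (α:ℕ) + 1 < n := by
    have h := hα; rw [Fin.lt_def, Fin.val_rev] at h; have := α.isLt; omega
  have hβv : (β:ℕ) + (β:ℕ) + 1 < n := by
    have h := hβ; rw [Fin.lt_def, Fin.val_rev] at h; have := β.isLt; omega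
  have hαne : α ≠ Fin.rev α := ne_of_lt hα
  have hβne : β ≠ Fin.rev β := ne_of_lt hβ
  rw [Finset.card_filter, Finset.sum_product, Finset.sum_pair hαne, Finset.sum_pair hβne,
    Finset.sum_pair hβne]
  have h2 : ¬ (Fin.rev β < α) := by rw [Fin.lt_def, Fin.val_rev]; omega
  have h3 : β < Fin.rev α := by rw [Fin.lt_def, Fin.val_rev]; omega
  rw [if_neg h2, if_pos h3]
  rcases eq_or_ne α β with rfl | hne
  · rw [if_neg (lt_irrefl α), if_neg (lt_irrefl (Fin.rev α)), if_pos rfl]; norm_num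
  · rw [if_neg hne]
    have h4 : Fin.rev β < Fin.rev α ↔ α < β := by
      rw [Fin.lt_def, Fin.lt_def, Fin.val_rev, Fin.val_rev]; omega
    rcases lt_trichotomy α β with h | h | h
    · rw [if_neg (asymm h), if_pos (h4.mpr h)]; norm_num
    · exact absurd h hne
    · rw [if_pos h, if_neg (fun hh => asymm h (h4.mp hh))]; norm_num

lemma aux_card_lt_gt {n : ℕ} :
    ((univ : Finset (Fin n × Fin n)).filter fun r => r.1 < r.2).card
  = ((univ : Finset (Fin n × Fin n)).filter fun r => r.2 < r.1).card := by
  apply Finset.card_bij' (fun r _ => (r.2, r.1)) (fun r _ => (r.2, r.1)) <;>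
    rintro ⟨a, b⟩ hr <;> simp_all

lemma aux_card_lt_swap {n : ℕ} (g : Fin n → Fin n) :
    ((univ : Finset (Fin n × Fin n)).filter fun r => r.1 < r.2 ∧ g r.1 = g r.2).card
  = ((univ : Finset (Fin n × Fin n)).filter fun r => r.2 < r.1 ∧ g r.1 = g r.2).card := by
  apply Finset.card_bij' (fun r _ => (r.2, r.1)) (fun r _ => (r.2, r.1)) <;>
    rintro ⟨a, b⟩ hr <;> simp_all

lemma aux_diag {n : ℕ} :
    ((univ : Finset (Fin n × Fin n)).filter fun r => r.1 = r.2).card = n := by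
  have h : ((univ : Finset (Fin n × Fin n)).filter fun r => r.1 = r.2).card
      = (univ : Finset (Fin n)).card := by
    apply Finset.card_bij' (fun r _ => r.1) (fun i _ => (i, i)) <;>
      first
      | (rintro ⟨a, b⟩ hr; simp_all)
      | (intro i hi; simp)
  rw [h]; simp

lemma aux_partition {n : ℕ} :
    2 * ((univ : Finset (Fin n × Fin n)).filter fun r => r.1 < r.2).card + n = n * n := by
  have h1 := Finset.card_filter_add_card_filter_not
    (s := (univ : Finset (Fin n × Fin n))) (fun r => r.1 < r.2)
  have hsplit := Finset.card_filter_add_card_filter_not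
    (s := (univ : Finset (Fin n × Fin n)).filter fun r => ¬ r.1 < r.2) (fun r => r.2 < r.1)
  have e1 : (((univ : Finset (Fin n × Fin n)).filter fun r => ¬ r.1 < r.2).filter
      (fun r => r.2 < r.1)) = (univ : Finset (Fin n × Fin n)).filter fun r => r.2 < r.1 := by
    ext r; simp only [mem_filter, mem_univ, true_and]
    exact ⟨fun h => h.2, fun h => ⟨asymm h, h⟩⟩
  have e2 : (((univ : Finset (Fin n × Fin n)).filter fun r => ¬ r.1 < r.2).filter
      (fun r => ¬ r.2 < r.1)) = (univ : Finset (Fin n × Fin n)).filter fun r => r.1 = r.2 := by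
    ext r; simp only [mem_filter, mem_univ, true_and]
    constructor
    · rintro ⟨ha, hb⟩; exact le_antisymm (not_lt.mp hb) (not_lt.mp ha)
    · intro h; rw [h]; exact ⟨lt_irrefl _, lt_irrefl _⟩
  have hcu : ((univ : Finset (Fin n × Fin n))).card = n * n := by simp
  rw [e1, e2, aux_diag] at hsplit
  rw [hcu] at h1
  have hlg := aux_card_lt_gt (n := n)
  generalize n * n = N at h1 ⊢
  omega

theorem self_conjugate_even_and_nu (n : ℕ) (hn : 2 ≤ n)
    (A : Matrix (Fin n) (Fin n) ℕ) (hA : A ∈ classA n 2)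
    (hself : conjM A = A) :
    Even n ∧ nu A = n^2 - 3*n/2 := by
  obtain ⟨h01, hrow, hcol⟩ := hA
  have hself' : ∀ i j, A i (Fin.rev j) = A i j := fun i j => congrFun (congrFun hself i) j
  have hrowcard : ∀ i, (univ.filter fun j => A i j = 1).card = 2 := by
    intro i
    have h2 : ∑ j, A i j = 2 := hrow i
    rw [Finset.card_filter, ← h2]
    exact Finset.sum_congr rfl fun j _ => by rcases h01 i j with h | h <;> simp [h]
  have hcolcard : ∀ c, (univ.filter fun i => A i c = 1).card = 2 := by
    intro c
    have h2 : ∑ i, A i c = 2 := hcol c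
    rw [Finset.card_filter, ← h2]
    exact Finset.sum_congr rfl fun i _ => by rcases h01 i c with h | h <;> simp [h]
  -- n is even
  have heven : Even n := by
    by_contra hodd
    rw [Nat.not_even_iff_odd] at hodd
    obtain ⟨m, hm⟩ := hodd
    have hmn : m < n := by omega
    have hzero : ∀ i, A i ⟨m, hmn⟩ = 0 := by
      intro i
      set c : Fin n := ⟨m, hmn⟩ with hc
      rcases h01 i c with h | h
      · exact h
      · exfalso
        have hmem : c ∈ univ.filter fun j => A i j = 1 := by
          simp only [Finset.mem_filter, Finset.mem_univ, true_and]; exact h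
        have hlt : 1 < (univ.filter fun j => A i j = 1).card := by rw [hrowcard i]; norm_num
        obtain ⟨x, hx, hxc⟩ := Finset.exists_mem_ne hlt c
        have hx1 : A i x = 1 := (Finset.mem_filter.mp hx).2
        have hrx : Fin.rev x ∈ univ.filter fun j => A i j = 1 := by
          simp only [Finset.mem_filter, Finset.mem_univ, true_and]
          rw [hself']; exact hx1
        have hcv : (c : ℕ) = m := rfl
        have hxval := x.isLt
        have hrevne : Fin.rev x ≠ x := by
          intro hfix
          have hv := congrArg Fin.val hfix
          rw [Fin.val_rev] at hv
          exact hxc (Fin.ext (by omega : (x : ℕ) = (c : ℕ)))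
        have hrevnec : Fin.rev x ≠ c := by
          intro hfix
          have hv := congrArg Fin.val hfix
          rw [Fin.val_rev, hcv] at hv
          exact hxc (Fin.ext (by omega : (x : ℕ) = (c : ℕ)))
        have hsub : ({c, x, Fin.rev x} : Finset (Fin n)) ⊆ univ.filter fun j => A i j = 1 := by
          intro y hy
          simp only [Finset.mem_insert, Finset.mem_singleton] at hy
          rcases hy with rfl | rfl | rfl
          · exact hmem
          · exact hx
          · exact hrx
        have hcard3 : ({c, x, Fin.rev x} : Finset (Fin n)).card = 3 := by
          rw [Finset.card_insert_of_notMem (by simp [hxc.symm, Ne.symm hrevnec]),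
            Finset.card_pair (Ne.symm hrevne)]
        have hle := Finset.card_le_card hsub
        rw [hrowcard i, hcard3] at hle
        omega
    have h0 : colSum A ⟨m, hmn⟩ = 0 := Finset.sum_eq_zero fun i _ => hzero i
    have h2 : colSum A ⟨m, hmn⟩ = 2 := hcol _
    omega
  refine ⟨heven, ?_⟩
  -- no fixed points of rev
  have hnofix : ∀ j : Fin n, j ≠ Fin.rev j := by
    intro j h
    have hv := congrArg Fin.val h
    rw [Fin.val_rev] at hv
    obtain ⟨m, hm⟩ := heven
    have := j.isLt
    omega
  have hne : ∀ i, (univ.filter fun j => A i j = 1).Nonempty := fun i =>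
    Finset.card_pos.mp (by rw [hrowcard i]; norm_num)
  -- the structure function f
  have hex : ∃ f : Fin n → Fin n, ∀ i, A i (f i) = 1 ∧ A i (Fin.rev (f i)) = 1 ∧
      f i < Fin.rev (f i) ∧ ∀ j, A i j = 1 → j = f i ∨ j = Fin.rev (f i) := by
    refine ⟨fun i => (univ.filter fun j => A i j = 1).min' (hne i), fun i => ?_⟩
    set c := (univ.filter fun j => A i j = 1).min' (hne i) with hc
    have hc1 : A i c = 1 := by
      have hmm := Finset.min'_mem (univ.filter fun j => A i j = 1) (hne i)
      rw [← hc] at hmm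
      exact (Finset.mem_filter.mp hmm).2
    have hc2 : A i (Fin.rev c) = 1 := by rw [hself']; exact hc1
    have hlt : c < Fin.rev c := by
      have hmem : Fin.rev c ∈ univ.filter fun j => A i j = 1 := by
        simp only [Finset.mem_filter, Finset.mem_univ, true_and]; exact hc2
      exact lt_of_le_of_ne (Finset.min'_le _ _ hmem) (hnofix c)
    refine ⟨hc1, hc2, hlt, ?_⟩
    intro j hj
    have hsub : ({c, Fin.rev c} : Finset (Fin n)) ⊆ univ.filter fun j => A i j = 1 := by
      intro y hy
      simp only [Finset.mem_insert, Finset.mem_singleton] at hy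
      rcases hy with rfl | rfl <;> simp only [Finset.mem_filter, Finset.mem_univ, true_and]
      · exact hc1
      · exact hc2
    have heq := Finset.eq_of_subset_of_card_le hsub
      (by rw [hrowcard i, Finset.card_pair (hnofix c)])
    have hjm : j ∈ ({c, Fin.rev c} : Finset (Fin n)) := by
      rw [heq]; simp only [Finset.mem_filter, Finset.mem_univ, true_and]; exact hj
    simpa using hjm
  obtain ⟨f, hfprop⟩ := hex
  have hfmem : ∀ i, A i (f i) = 1 := fun i => (hfprop i).1
  have hfrev : ∀ i, A i (Fin.rev (f i)) = 1 := fun i => (hfprop i).2.1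
  have hflt : ∀ i, f i < Fin.rev (f i) := fun i => (hfprop i).2.2.1
  have hmem_iff : ∀ i j, A i j = 1 ↔ j = f i ∨ j = Fin.rev (f i) := by
    intro i j
    refine ⟨(hfprop i).2.2.2 j, ?_⟩
    rintro (rfl | rfl)
    exacts [hfmem i, hfrev i]
  have hfval : ∀ i, (f i : ℕ) + (f i : ℕ) + 1 < n := by
    intro i
    have h := hflt i
    rw [Fin.lt_def, Fin.val_rev] at h
    have := (f i).isLt
    omega
  -- fibers of f have size 2
  have hfiber : ∀ i, (univ.filter fun i2 => f i2 = f i).card = 2 := by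
    intro i
    rw [← hcolcard (f i)]
    congr 1
    ext i2
    simp only [Finset.mem_filter, Finset.mem_univ, true_and]
    constructor
    · intro h
      exact (hmem_iff i2 (f i)).mpr (Or.inl h.symm)
    · intro h
      rcases (hmem_iff i2 (f i)).mp h with h1 | h1
      · exact h1.symm
      · exfalso
        have hv := congrArg Fin.val h1
        rw [Fin.val_rev] at hv
        have h2 := hfval i
        have h3 := hfval i2
        omega
  -- the fiberwise decomposition of nu
  set t : Finset (Fin n × Fin n) := univ.filter (fun r : Fin n × Fin n => r.1 < r.2) with ht
  have hnu1 : nu A = ∑ r ∈ t, ((univ.filter (fun p : (Fin n × Fin n) × (Fin n × Fin n) =>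
      p.1.1 < p.2.1 ∧ p.2.2 < p.1.2 ∧ A p.1.1 p.1.2 = 1 ∧ A p.2.1 p.2.2 = 1)).filter
      (fun p => (p.1.1, p.2.1) = r)).card := by
    apply Finset.card_eq_sum_card_fiberwise
    intro p hp
    simp only [Finset.mem_coe, Finset.mem_filter, Finset.mem_univ, true_and] at hp
    rw [ht]
    simp only [Finset.mem_coe, Finset.mem_filter, Finset.mem_univ, true_and]
    exact hp.1
  have hinner : ∀ r ∈ t, ((univ.filter (fun p : (Fin n × Fin n) × (Fin n × Fin n) =>
      p.1.1 < p.2.1 ∧ p.2.2 < p.1.2 ∧ A p.1.1 p.1.2 = 1 ∧ A p.2.1 p.2.2 = 1)).filter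
      (fun p => (p.1.1, p.2.1) = r)).card = if f r.1 = f r.2 then 1 else 2 := by
    intro r hr
    have hr12 : r.1 < r.2 := by
      rw [ht] at hr
      simpa using hr
    rw [← aux_small_count (f r.1) (f r.2) (hflt r.1) (hflt r.2)]
    refine Finset.card_bij' (fun p _ => (p.1.2, p.2.2))
      (fun q _ => ((r.1, q.1), (r.2, q.2))) ?_ ?_ ?_ ?_
    · rintro ⟨⟨i1, j1⟩, i2, j2⟩ hp
      simp only [Finset.mem_filter, Finset.mem_univ, true_and] at hp
      obtain ⟨⟨h1, h2, h3, h4⟩, h5⟩ := hp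
      subst h5
      simp only [Finset.mem_filter, Finset.mem_product, Finset.mem_insert,
        Finset.mem_singleton]
      exact ⟨⟨(hmem_iff i1 j1).mp h3, (hmem_iff i2 j2).mp h4⟩, h2⟩
    · rintro ⟨q1, q2⟩ hq
      simp only [Finset.mem_filter, Finset.mem_product, Finset.mem_insert,
        Finset.mem_singleton] at hq
      obtain ⟨⟨hq1, hq2⟩, hq3⟩ := hq
      simp only [Finset.mem_filter, Finset.mem_univ, true_and]
      exact ⟨⟨hr12, hq3, (hmem_iff r.1 q1).mpr hq1, (hmem_iff r.2 q2).mpr hq2⟩, trivial⟩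
    · rintro ⟨⟨i1, j1⟩, i2, j2⟩ hp
      simp only [Finset.mem_filter, Finset.mem_univ, true_and] at hp
      obtain ⟨-, h5⟩ := hp
      subst h5
      rfl
    · rintro ⟨q1, q2⟩ hq
      rfl
  have hnu2 : nu A = ∑ r ∈ t, if f r.1 = f r.2 then 1 else 2 := by
    rw [hnu1]
    exact Finset.sum_congr rfl hinner
  have hED : (t.filter fun r => f r.1 = f r.2).card
      + (t.filter fun r => ¬ f r.1 = f r.2).card = t.card :=
    Finset.card_filter_add_card_filter_not _
  have hnu3 : nu A = (t.filter fun r => f r.1 = f r.2).card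
      + 2 * (t.filter fun r => ¬ f r.1 = f r.2).card := by
    rw [hnu2, Finset.sum_ite, Finset.sum_const, Finset.sum_const, smul_eq_mul, smul_eq_mul]
    ring
  -- 2E = n
  have hEn : 2 * (t.filter fun r => f r.1 = f r.2).card = n := by
    have hGn : ((univ : Finset (Fin n × Fin n)).filter
        (fun r => r.1 ≠ r.2 ∧ f r.1 = f r.2)).card = n := by
      rw [Finset.card_eq_sum_card_fiberwise
        (f := fun r : Fin n × Fin n => r.1) (t := univ) (fun x _ => mem_univ _)]
      have hin : ∀ i1 : Fin n, (((univ : Finset (Fin n × Fin n)).filter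
          (fun r => r.1 ≠ r.2 ∧ f r.1 = f r.2)).filter (fun r => r.1 = i1)).card = 1 := by
        intro i1
        have hbij : (((univ : Finset (Fin n × Fin n)).filter
            (fun r => r.1 ≠ r.2 ∧ f r.1 = f r.2)).filter (fun r => r.1 = i1)).card
            = ((univ.filter fun i2 => f i2 = f i1).erase i1).card := by
          refine Finset.card_bij' (fun r _ => r.2) (fun i2 _ => (i1, i2)) ?_ ?_ ?_ ?_
          · rintro ⟨a, b⟩ hr
            simp only [Finset.mem_filter, Finset.mem_univ, true_and, ne_eq] at hr
            obtain ⟨⟨hab, hfab⟩, ha⟩ := hr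
            subst ha
            rw [Finset.mem_erase]
            refine ⟨fun hh => hab hh.symm, ?_⟩
            simp only [Finset.mem_filter, Finset.mem_univ, true_and]
            exact hfab.symm
          · intro i2 hi2
            rw [Finset.mem_erase] at hi2
            obtain ⟨hne', hmem'⟩ := hi2
            simp only [Finset.mem_filter, Finset.mem_univ, true_and] at hmem' ⊢
            exact ⟨⟨fun hh => hne' hh.symm, hmem'.symm⟩, trivial⟩
          · rintro ⟨a, b⟩ hr
            simp only [Finset.mem_filter, Finset.mem_univ, true_and] at hr
            obtain ⟨-, ha⟩ := hr
            subst ha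
            rfl
          · intro i2 _
            rfl
        rw [hbij, Finset.card_erase_of_mem (by simp), hfiber i1]
      rw [Finset.sum_congr rfl (fun i1 _ => hin i1)]
      simp
    have hsplit := Finset.card_filter_add_card_filter_not
      (s := (univ : Finset (Fin n × Fin n)).filter (fun r => r.1 ≠ r.2 ∧ f r.1 = f r.2))
      (fun r => r.1 < r.2)
    have e1 : (((univ : Finset (Fin n × Fin n)).filter
        (fun r => r.1 ≠ r.2 ∧ f r.1 = f r.2)).filter (fun r => r.1 < r.2))
        = (univ : Finset (Fin n × Fin n)).filter (fun r => r.1 < r.2 ∧ f r.1 = f r.2) := by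
      ext r
      simp only [Finset.mem_filter, Finset.mem_univ, true_and, ne_eq]
      constructor
      · rintro ⟨⟨-, hf'⟩, hlt'⟩; exact ⟨hlt', hf'⟩
      · rintro ⟨hlt', hf'⟩; exact ⟨⟨ne_of_lt hlt', hf'⟩, hlt'⟩
    have e2 : (((univ : Finset (Fin n × Fin n)).filter
        (fun r => r.1 ≠ r.2 ∧ f r.1 = f r.2)).filter (fun r => ¬ r.1 < r.2))
        = (univ : Finset (Fin n × Fin n)).filter (fun r => r.2 < r.1 ∧ f r.1 = f r.2) := by
      ext r
      simp only [Finset.mem_filter, Finset.mem_univ, true_and, ne_eq]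
      constructor
      · rintro ⟨⟨hne', hf'⟩, hnlt⟩
        exact ⟨lt_of_le_of_ne (not_lt.mp hnlt) (fun hh => hne' hh.symm), hf'⟩
      · rintro ⟨hlt', hf'⟩
        exact ⟨⟨fun hh => asymm hlt' (hh ▸ hlt'), hf'⟩, asymm hlt'⟩
    have e4 : t.filter (fun r => f r.1 = f r.2)
        = (univ : Finset (Fin n × Fin n)).filter (fun r => r.1 < r.2 ∧ f r.1 = f r.2) := by
      rw [ht, Finset.filter_filter]
    have e3 := aux_card_lt_swap f
    have c1 := congrArg Finset.card e1
    have c2 := congrArg Finset.card e2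
    have c4 := congrArg Finset.card e4
    omega
  have htotal := aux_partition (n := n)
  rw [← ht] at htotal
  -- final arithmetic
  rw [pow_two]
  generalize n * n = N at htotal ⊢
  omega
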